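/- Let (A, m) be a complete local ring and q(t) ∈ A[t] a Weierstrass polynomial of degree d. Then for every f(t) ∈ A[[t]] there exist unique g(t) ∈ A[[t]] and r(t) ∈ A[t] with deg r < d such that f(t) = g(t)·q(t) + r(t). -/

import Mathlib

open IsLocalRing Polynomial

/-- A Weierstrass polynomial of degree `d` over a local ring: a monic polynomial of
degree `d` all of whose non-leading coefficients lie in the maximal ideal. -/
def IsWeierstrassPolynomial {A : Type*} [CommRing A] [IsLocalRing A]
    (q : Polynomial A) (d : ℕ) : Prop :=
  q.Monic ∧ q.natDegree = d ∧ ∀ i < d, q.coeff i ∈ maximalIdeal A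

namespace WeierstrassAux

variable {A : Type*} [CommRing A]

/-- Divide a power series by `X^d`, discarding the remainder. -/
noncomputable def shift (d : ℕ) : PowerSeries A →ₗ[A] PowerSeries A where
  toFun f := PowerSeries.mk fun n => PowerSeries.coeff (n + d) f
  map_add' f g := by ext n; simp
  map_smul' c f := by ext n; simp

@[simp] lemma coeff_shift (d n : ℕ) (f : PowerSeries A) :
    PowerSeries.coeff n (shift d f) = PowerSeries.coeff (n + d) f := by
  simp [shift]

lemma decomp (d : ℕ) (f : PowerSeries A) :
    f = ((PowerSeries.trunc d f : Polynomial A) : PowerSeries A)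
      + PowerSeries.X ^ d * shift d f := by
  ext n
  rw [map_add, Polynomial.coeff_coe, PowerSeries.coeff_trunc,
    PowerSeries.coeff_X_pow_mul']
  by_cases h : d ≤ n
  · rw [if_neg (by omega), if_pos h, coeff_shift, tsub_add_cancel_of_le h, zero_add]
  · rw [if_pos (by omega), if_neg h, add_zero]

lemma shift_X_pow_mul (d : ℕ) (g : PowerSeries A) :
    shift d (PowerSeries.X ^ d * g) = g := by
  ext n
  rw [coeff_shift, PowerSeries.coeff_X_pow_mul g d n]

lemma coeff_mul_mem (I J : Ideal A) {a b : PowerSeries A}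
    (ha : ∀ n, PowerSeries.coeff n a ∈ I) (hb : ∀ n, PowerSeries.coeff n b ∈ J)
    (n : ℕ) : PowerSeries.coeff n (a * b) ∈ I * J := by
  rw [PowerSeries.coeff_mul]
  exact Ideal.sum_mem _ fun p _ => Ideal.mul_mem_mul (ha _) (hb _)

lemma smul_top_eq (I : Ideal A) : I • (⊤ : Submodule A A) = I := by
  rw [smul_eq_mul, Ideal.mul_top]

/-- If all coefficients of a power series lie in `I^k` for every `k`, and `A` is
`I`-adically Hausdorff, the power series is zero. -/
lemma eq_zero_of_coeff_mem (I : Ideal A) [IsHausdorff I A] {g : PowerSeries A}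
    (h : ∀ k n, PowerSeries.coeff n g ∈ I ^ k) : g = 0 := by
  ext n
  refine IsHausdorff.haus (inferInstance : IsHausdorff I A) _ fun k => ?_
  rw [SModEq.zero, smul_top_eq]
  exact h k n

/-- Uniqueness half: if `g * (P + X^d)` is a polynomial of degree `< d` and `P` has all
coefficients in `I`, then `g = 0`. -/
lemma eq_zero_of_mul (I : Ideal A) [IsHausdorff I A] (d : ℕ) {P : PowerSeries A}
    (hP : ∀ n, PowerSeries.coeff n P ∈ I)
    {g : PowerSeries A} {r : Polynomial A} (hr : r.degree < (d : WithBot ℕ))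
    (h : g * (P + PowerSeries.X ^ d) = (r : PowerSeries A)) : g = 0 := by
  have hsr : shift d (r : PowerSeries A) = 0 := by
    ext n
    rw [coeff_shift, Polynomial.coeff_coe, Polynomial.coeff_eq_zero_of_degree_lt, map_zero]
    exact lt_of_lt_of_le hr (by exact_mod_cast Nat.le_add_left d n)
  have hkey : g = -shift d (g * P) := by
    have h2 := congrArg (shift d) h
    rw [hsr, mul_add, map_add, mul_comm g (PowerSeries.X ^ d), shift_X_pow_mul] at h2
    linear_combination h2
  refine eq_zero_of_coeff_mem I fun k => ?_
  induction k with
  | zero => intro n; simp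
  | succ k ih =>
    intro n
    rw [hkey, map_neg, coeff_shift]
    exact neg_mem (pow_succ I k ▸ coeff_mul_mem (I ^ k) I ih hP (n + d))

/-- The iterative approximation sequence for Weierstrass division. -/
noncomputable def seq (d : ℕ) (P f : PowerSeries A) : ℕ → PowerSeries A
  | 0 => shift d f
  | k + 1 => -shift d (seq d P f k * P)

/-- Partial sums of the approximation sequence. -/
noncomputable def S (d : ℕ) (P f : PowerSeries A) (N : ℕ) : PowerSeries A :=
  ∑ k ∈ Finset.range N, seq d P f k

lemma coeff_seq_mem (I : Ideal A) {d : ℕ} {P : PowerSeries A}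
    (hP : ∀ n, PowerSeries.coeff n P ∈ I) (f : PowerSeries A) :
    ∀ k n, PowerSeries.coeff n (seq d P f k) ∈ I ^ k := by
  intro k
  induction k with
  | zero => intro n; simp
  | succ k ih =>
    intro n
    rw [seq, map_neg, coeff_shift]
    exact neg_mem (pow_succ I k ▸ coeff_mul_mem (I ^ k) I ih hP (n + d))

lemma shift_S_mul (d : ℕ) (P f : PowerSeries A) (N : ℕ) :
    S d P f N + shift d (S d P f N * P) - shift d f = -(seq d P f N) := by
  have h1 : shift d (S d P f N * P) = -(∑ k ∈ Finset.range N, seq d P f (k + 1)) := by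
    rw [S, Finset.sum_mul, map_sum, ← Finset.sum_neg_distrib]
    exact Finset.sum_congr rfl fun k _ => by rw [seq, neg_neg]
  have h2 : ∑ k ∈ Finset.range N, seq d P f (k + 1)
      = S d P f (N + 1) - seq d P f 0 := by
    rw [S, Finset.sum_range_succ']; ring
  have h3 : S d P f (N + 1) = S d P f N + seq d P f N := by
    rw [S, S, Finset.sum_range_succ]
  rw [h1, h2, h3, seq]
  ring

end WeierstrassAux

open WeierstrassAux in
/-- Weierstrass division: if `(A, m)` is a complete local ring and `q ∈ A[t]` a
Weierstrass polynomial of degree `d`, then every `f ∈ A[[t]]` can be written uniquely as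
`f = g·q + r` with `g ∈ A[[t]]` and `r ∈ A[t]` of degree `< d`. -/
theorem weierstrass_division {A : Type*} [CommRing A] [IsLocalRing A]
    [IsAdicComplete (maximalIdeal A) A]
    {d : ℕ} {q : Polynomial A} (hq : IsWeierstrassPolynomial q d)
    (f : PowerSeries A) :
    ∃! gr : PowerSeries A × Polynomial A,
      gr.2.degree < (d : WithBot ℕ) ∧
        f = gr.1 * (q : PowerSeries A) + (gr.2 : PowerSeries A) := by
  obtain ⟨hmon, hdeg, hcoef⟩ := hq
  set I := maximalIdeal A with hI
  set P : PowerSeries A := (q : PowerSeries A) - PowerSeries.X ^ d with hPdef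
  have hqP : (q : PowerSeries A) = P + PowerSeries.X ^ d := by rw [hPdef]; ring
  have hP : ∀ n, PowerSeries.coeff n P ∈ I := by
    intro n
    rw [hPdef, map_sub, Polynomial.coeff_coe, PowerSeries.coeff_X_pow]
    rcases lt_trichotomy n d with h | h | h
    · rw [if_neg h.ne, sub_zero]; exact hcoef n h
    · subst h
      rw [if_pos rfl, ← hdeg, hmon.coeff_natDegree, sub_self]
      exact zero_mem I
    · rw [if_neg h.ne', Polynomial.coeff_eq_zero_of_natDegree_lt (hdeg ▸ h), sub_zero]
      exact zero_mem I
  -- existence: construct g as limit of partial sums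
  have hcau : ∀ n N M : ℕ, N ≤ M →
      PowerSeries.coeff n (S d P f N) ≡ PowerSeries.coeff n (S d P f M)
        [SMOD (I ^ N • ⊤ : Submodule A A)] := by
    intro n N M hNM
    rw [SModEq.sub_mem, smul_top_eq]
    have h4 : PowerSeries.coeff n (S d P f N) - PowerSeries.coeff n (S d P f M)
        = -∑ k ∈ Finset.Ico N M, PowerSeries.coeff n (seq d P f k) := by
      rw [Finset.sum_Ico_eq_sub _ hNM]
      simp [S, neg_sub]
    rw [h4]
    refine neg_mem (Ideal.sum_mem _ fun k hk => ?_)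
    exact Ideal.pow_le_pow_right (Finset.mem_Ico.mp hk).1 (coeff_seq_mem I hP f k n)
  have hchoice : ∀ n : ℕ, ∃ Ln : A, ∀ N : ℕ,
      PowerSeries.coeff n (S d P f N) ≡ Ln [SMOD (I ^ N • ⊤ : Submodule A A)] :=
    fun n => IsPrecomplete.prec (IsAdicComplete.toIsPrecomplete)
      fun {N M} h => hcau n N M h
  choose L hL using hchoice
  set g : PowerSeries A := PowerSeries.mk L with hg
  have hgS : ∀ N n, PowerSeries.coeff n (g - S d P f N) ∈ I ^ N := by
    intro N n
    have h5 := (hL n N).symm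
    rw [SModEq.sub_mem, smul_top_eq] at h5
    simpa [hg] using h5
  -- the fixed point equation
  have hfix : g + shift d (g * P) - shift d f = 0 := by
    refine eq_zero_of_coeff_mem I fun N n => ?_
    have hsplit : g + shift d (g * P) - shift d f
        = (g - S d P f N) + shift d ((g - S d P f N) * P) + (-(seq d P f N)) := by
      rw [← shift_S_mul d P f N]
      have h6 : (g - S d P f N) * P + S d P f N * P = g * P := by ring
      rw [← h6, map_add]
      ring
    rw [hsplit, map_add, map_add, coeff_shift, map_neg]
    refine add_mem (add_mem (hgS N n) ?_) (neg_mem (coeff_seq_mem I hP f N n))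
    have h7 : PowerSeries.coeff (n + d) ((g - S d P f N) * P) ∈ I ^ N * I :=
      coeff_mul_mem (I ^ N) I (hgS N) hP (n + d)
    exact Ideal.mul_le_left h7
  have hfix' : shift d (f - g * P) = g := by
    rw [map_sub]
    linear_combination -hfix
  have hfg : f = g * (q : PowerSeries A)
      + ((PowerSeries.trunc d (f - g * P) : Polynomial A) : PowerSeries A) := by
    have h8 := decomp d (f - g * P)
    rw [hfix'] at h8
    linear_combination h8 + g * hqP
  refine ⟨⟨g, PowerSeries.trunc d (f - g * P)⟩, ⟨PowerSeries.degree_trunc_lt _ d, hfg⟩, ?_⟩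
  -- uniqueness
  rintro ⟨g', r'⟩ ⟨hr', hf'⟩
  dsimp only at hr' hf'
  have hr : (PowerSeries.trunc d (f - g * P)).degree < (d : WithBot ℕ) :=
    PowerSeries.degree_trunc_lt _ d
  have hdiff : (g' - g) * (P + PowerSeries.X ^ d)
      = ((PowerSeries.trunc d (f - g * P) - r' : Polynomial A) : PowerSeries A) := by
    rw [Polynomial.coe_sub, ← hqP]
    linear_combination hfg - hf'
  have hdd : (PowerSeries.trunc d (f - g * P) - r' : Polynomial A).degree
      < (d : WithBot ℕ) :=
    lt_of_le_of_lt (Polynomial.degree_sub_le _ _) (max_lt hr hr')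
  have hg0 : g' - g = 0 := eq_zero_of_mul I d hP hdd hdiff
  have hr0 : ((PowerSeries.trunc d (f - g * P) - r' : Polynomial A) : PowerSeries A)
      = 0 := by rw [← hdiff, hg0, zero_mul]
  rw [Polynomial.coe_eq_zero_iff, sub_eq_zero] at hr0
  have hgg : g' = g := by linear_combination hg0
  simp [Prod.ext_iff, hgg, hr0]
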